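/- For all real x ≠ 0, 2·(sinh x)/x + (tanh x)/x > 2·x/(sinh x) + x/(tanh x). -/

import Mathlib

open Real Set

private lemma cosh_quad_aux : ∀ t : ℝ, 0 ≤ t → 1 + t ^ 2 / 2 ≤ Real.cosh t := by
  have hd : ∀ t : ℝ, HasDerivAt (fun t : ℝ => Real.cosh t - (1 + t ^ 2 / 2))
      (Real.sinh t - t) t := by
    intro t
    have h1 := (Real.hasDerivAt_cosh t).sub
      ((((hasDerivAt_id t).pow 2).div_const 2).const_add 1)
    exact h1.congr_deriv (by simp)
  intro t ht
  have hmono : MonotoneOn (fun t : ℝ => Real.cosh t - (1 + t ^ 2 / 2)) (Ici 0) := by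
    apply monotoneOn_of_deriv_nonneg (convex_Ici 0)
    · exact (Real.continuous_cosh.sub (by continuity)).continuousOn
    · intro x hx
      exact (hd x).differentiableAt.differentiableWithinAt
    · intro x hx
      rw [interior_Ici, mem_Ioi] at hx
      rw [(hd x).deriv]
      have := Real.self_le_sinh_iff.2 hx.le
      linarith
  have h0 : (fun t : ℝ => Real.cosh t - (1 + t ^ 2 / 2)) 0 ≤
      (fun t : ℝ => Real.cosh t - (1 + t ^ 2 / 2)) t :=
    hmono (self_mem_Ici) ht ht
  simp [Real.cosh_zero] at h0
  linarith

private lemma sinh_cubic_aux : ∀ t : ℝ, 0 ≤ t → t + t ^ 3 / 6 ≤ Real.sinh t := by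
  have hd : ∀ t : ℝ, HasDerivAt (fun t : ℝ => Real.sinh t - (t + t ^ 3 / 6))
      (Real.cosh t - (1 + t ^ 2 / 2)) t := by
    intro t
    have h1 := (Real.hasDerivAt_sinh t).sub
      ((hasDerivAt_id t).add (((hasDerivAt_id t).pow 3).div_const 6))
    exact h1.congr_deriv (by simp; ring)
  intro t ht
  have hmono : MonotoneOn (fun t : ℝ => Real.sinh t - (t + t ^ 3 / 6)) (Ici 0) := by
    apply monotoneOn_of_deriv_nonneg (convex_Ici 0)
    · exact (Real.continuous_sinh.sub (by continuity)).continuousOn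
    · intro x hx
      exact (hd x).differentiableAt.differentiableWithinAt
    · intro x hx
      rw [interior_Ici, mem_Ioi] at hx
      rw [(hd x).deriv]
      have := cosh_quad_aux x hx.le
      linarith
  have h0 : (fun t : ℝ => Real.sinh t - (t + t ^ 3 / 6)) 0 ≤
      (fun t : ℝ => Real.sinh t - (t + t ^ 3 / 6)) t :=
    hmono (self_mem_Ici) ht ht
  simp [Real.sinh_zero] at h0
  linarith

private lemma sinh_le_mul_cosh_aux : ∀ t : ℝ, 0 ≤ t → Real.sinh t ≤ t * Real.cosh t := by
  have hd : ∀ t : ℝ, HasDerivAt (fun t : ℝ => t * Real.cosh t - Real.sinh t)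
      (t * Real.sinh t) t := by
    intro t
    have h1 := ((hasDerivAt_id t).mul (Real.hasDerivAt_cosh t)).sub (Real.hasDerivAt_sinh t)
    exact h1.congr_deriv (by simp)
  intro t ht
  have hmono : MonotoneOn (fun t : ℝ => t * Real.cosh t - Real.sinh t) (Ici 0) := by
    apply monotoneOn_of_deriv_nonneg (convex_Ici 0)
    · exact ((continuous_id.mul Real.continuous_cosh).sub Real.continuous_sinh).continuousOn
    · intro x hx
      exact (hd x).differentiableAt.differentiableWithinAt
    · intro x hx
      rw [interior_Ici, mem_Ioi] at hx
      rw [(hd x).deriv]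
      have : 0 ≤ Real.sinh x := Real.sinh_nonneg_iff.2 hx.le
      positivity
  have h0 : (fun t : ℝ => t * Real.cosh t - Real.sinh t) 0 ≤
      (fun t : ℝ => t * Real.cosh t - Real.sinh t) t :=
    hmono (self_mem_Ici) ht ht
  simp [Real.sinh_zero, Real.cosh_zero] at h0
  linarith

private lemma huygens_pos (x : ℝ) (hx : 0 < x) :
    2 * (Real.sinh x / x) + Real.tanh x / x > 2 * (x / Real.sinh x) + x / Real.tanh x := by
  set s := Real.sinh x with hs
  set c := Real.cosh x with hc
  have hs0 : 0 < s := Real.sinh_pos_iff.2 hx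
  have hc1 : 1 < c := Real.one_lt_cosh.2 hx.ne'
  have hc0 : 0 < c := by linarith
  -- key polynomial inequality : s^2*(2*c+1) > x^2*(c^2+2*c)
  have key : s ^ 2 * (2 * c + 1) > x ^ 2 * (c ^ 2 + 2 * c) := by
    set u := Real.sinh (x / 2) with hud
    set v := Real.cosh (x / 2) with hvd
    have hx2 : 0 < x / 2 := by linarith
    have hv0 : 0 < v := hvd ▸ Real.cosh_pos _
    have hu0 : 0 < u := Real.sinh_pos_iff.2 hx2
    have hsd : s = 2 * u * v := by
      have h2 := Real.sinh_two_mul (x / 2)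
      rw [show (2 : ℝ) * (x / 2) = x from by ring] at h2
      rw [hs, hud, hvd, h2]
    have hcd : c = 2 * v ^ 2 - 1 := by
      have h2 := Real.cosh_two_mul (x / 2)
      rw [show (2 : ℝ) * (x / 2) = x from by ring] at h2
      have h3 := Real.sinh_sq (x / 2)
      rw [hc, h2, hud.symm, hvd.symm] at *
      linarith
    have hv_id : v ^ 2 = u ^ 2 + 1 := by
      rw [hud, hvd, Real.cosh_sq']
      ring
    have hu_lb : x / 2 + (x / 2) ^ 3 / 6 ≤ u := sinh_cubic_aux _ hx2.le
    have hu_ub : u ≤ (x / 2) * v := sinh_le_mul_cosh_aux _ hx2.le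
    have hA : x ^ 4 / 48 ≤ u ^ 2 - x ^ 2 / 4 := by
      nlinarith [mul_le_mul hu_lb hu_lb (by positivity) hu0.le, pow_pos hx 6]
    have hB : u ^ 2 ≤ x ^ 2 * v ^ 2 / 4 := by
      nlinarith [mul_le_mul hu_ub hu_ub hu0.le (by positivity)]
    have hv1 : 1 < v ^ 2 := by nlinarith [mul_pos hu0 hu0]
    have t1 : 0 ≤ 4 * v ^ 2 * (4 * v ^ 2 - 1) * (u ^ 2 - x ^ 2 / 4 - x ^ 4 / 48) :=
      mul_nonneg (by nlinarith) (by linarith)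
    have t2 : x ^ 2 * u ^ 2 ≤ x ^ 2 * (x ^ 2 * v ^ 2 / 4) :=
      mul_le_mul_of_nonneg_left hB (sq_nonneg x)
    have t3 : 0 < x ^ 4 * v ^ 2 * (v ^ 2 - 1) / 3 := by
      apply div_pos _ (by norm_num)
      apply mul_pos (by positivity)
      linarith
    have t4 : x ^ 2 * v ^ 2 = x ^ 2 * u ^ 2 + x ^ 2 := by rw [hv_id]; ring
    rw [hsd, hcd]
    nlinarith [t1, t2, t3, t4]
  have htanh : Real.tanh x = s / c := Real.tanh_eq_sinh_div_cosh x
  rw [gt_iff_lt, ← sub_pos, htanh]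
  have heq : 2 * (s / x) + s / c / x - (2 * (x / s) + x / (s / c)) =
      (s ^ 2 * (2 * c + 1) - x ^ 2 * (c ^ 2 + 2 * c)) / (x * s * c) := by
    field_simp
    ring
  rw [heq]
  apply div_pos (by linarith) (by positivity)

theorem refined_huygens_hyperbolic_first (x : ℝ) (hx : x ≠ 0) :
    2 * (Real.sinh x / x) + Real.tanh x / x > 2 * (x / Real.sinh x) + x / Real.tanh x := by
  rcases hx.lt_or_gt with h | h
  · have := huygens_pos (-x) (by linarith)
    simpa only [Real.sinh_neg, Real.tanh_neg, neg_div_neg_eq] using this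
  · exact huygens_pos x h
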